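/- For θ real and n ∈ ℕ, the unique monic polynomial P of degree n whose roots ξ₁,...,ξₙ satisfy ξ₁ᵏ + ... + ξₙᵏ = θ for all 1 ≤ k ≤ n is P(x) = Σ_{i=0}ⁿ (-1)^i C(θ,i) x^{n-i}, where C(θ,i) = θ(θ-1)...(θ-i+1)/i! is the generalized binomial coefficient. Equivalently, its reciprocal polynomial P*(x) agrees with the Taylor series of (1-x)^θ through order xⁿ. -/

import Mathlib

open Polynomial

/-- The generalized binomial coefficient `C(t, i) = t(t-1)⋯(t-i+1)/i!`. -/
noncomputable def gchoose (t : ℝ) (i : ℕ) : ℝ :=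
  (∏ j ∈ Finset.range i, (t - j)) / (Nat.factorial i)

lemma gchoose_zero (θ : ℝ) : gchoose θ 0 = 1 := by simp [gchoose]

lemma prod_shift (θ : ℝ) (k : ℕ) :
    ∏ j ∈ Finset.range (k + 1), (θ - j) = θ * ∏ j ∈ Finset.range k, ((θ - 1) - j) := by
  rw [Finset.prod_range_succ']
  simp only [Nat.cast_zero, sub_zero]
  rw [mul_comm]
  congr 1
  refine Finset.prod_congr rfl fun j _ => ?_
  push_cast
  ring

lemma mul_gchoose (θ : ℝ) (m : ℕ) :
    ((m + 1 : ℕ) : ℝ) * gchoose θ (m + 1) = θ * gchoose (θ - 1) m := by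
  unfold gchoose
  rw [prod_shift, Nat.factorial_succ]
  have h1 : (Nat.factorial m : ℝ) ≠ 0 := Nat.cast_ne_zero.mpr (Nat.factorial_ne_zero m)
  have h2 : ((m : ℝ) + 1) ≠ 0 := by positivity
  push_cast
  field_simp

lemma gchoose_pascal (θ : ℝ) (m : ℕ) :
    gchoose θ (m + 1) = gchoose (θ - 1) (m + 1) + gchoose (θ - 1) m := by
  unfold gchoose
  rw [prod_shift, Finset.prod_range_succ, Nat.factorial_succ]
  have h1 : (Nat.factorial m : ℝ) ≠ 0 := Nat.cast_ne_zero.mpr (Nat.factorial_ne_zero m)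
  have h2 : ((m : ℝ) + 1) ≠ 0 := by positivity
  push_cast
  field_simp
  ring

lemma alt_sum_gchoose (θ : ℝ) (m : ℕ) :
    ∑ i ∈ Finset.range (m + 1), (-1 : ℝ) ^ i * gchoose θ i
      = (-1) ^ m * gchoose (θ - 1) m := by
  induction m with
  | zero => simp [gchoose]
  | succ m ih =>
    rw [Finset.sum_range_succ, ih, gchoose_pascal]
    ring

lemma sum_filter_antidiagonal {M : Type*} [AddCommMonoid M] (k : ℕ) (g : ℕ → ℕ → M) :
    ∑ a ∈ (Finset.HasAntidiagonal.antidiagonal k).filter (fun a => a.1 < k), g a.1 a.2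
      = ∑ i ∈ Finset.range k, g i (k - i) := by
  rw [Finset.sum_filter, Finset.Nat.sum_antidiagonal_eq_sum_range_succ_mk,
    Finset.sum_range_succ, if_neg (lt_irrefl k), add_zero]
  refine Finset.sum_congr rfl fun i hi => ?_
  rw [if_pos (Finset.mem_range.mp hi)]

lemma key_real (θ : ℝ) (k : ℕ) (hk : 1 ≤ k) :
    (k : ℝ) * gchoose θ k =
      (-1) ^ (k + 1) * ∑ a ∈ (Finset.HasAntidiagonal.antidiagonal k).filter (fun a => a.1 < k),
        (-1) ^ a.1 * gchoose θ a.1 * θ := by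
  obtain ⟨m, rfl⟩ := Nat.exists_eq_add_of_le hk
  rw [add_comm 1 m]
  rw [sum_filter_antidiagonal (m + 1) (fun i _ => (-1 : ℝ) ^ i * gchoose θ i * θ)]
  rw [← Finset.sum_mul, alt_sum_gchoose, mul_gchoose]
  have : ((-1 : ℝ)) ^ (m + 1 + 1) * (-1) ^ m = 1 := by
    rw [← pow_add]
    exact Even.neg_one_pow ⟨m + 1, by ring⟩
  calc θ * gchoose (θ - 1) m
      = ((-1 : ℝ)) ^ (m + 1 + 1) * (-1) ^ m * (gchoose (θ - 1) m * θ) := by rw [this]; ring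
    _ = (-1) ^ (m + 1 + 1) * ((-1) ^ m * gchoose (θ - 1) m * θ) := by ring

lemma key_complex (θ : ℝ) (k : ℕ) (hk : 1 ≤ k) :
    (k : ℂ) * ((gchoose θ k : ℝ) : ℂ) =
      (-1) ^ (k + 1) * ∑ a ∈ (Finset.HasAntidiagonal.antidiagonal k).filter (fun a => a.1 < k),
        (-1) ^ a.1 * ((gchoose θ a.1 : ℝ) : ℂ) * (θ : ℂ) := by
  exact_mod_cast congrArg (Complex.ofReal) (key_real θ k hk)

lemma newton_multiset (R : Multiset ℂ) (k : ℕ) :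
    (k : ℂ) * R.esymm k =
      (-1) ^ (k + 1) * ∑ a ∈ (Finset.HasAntidiagonal.antidiagonal k).filter (fun a => a.1 < k),
        (-1) ^ a.1 * R.esymm a.1 * (R.map (· ^ a.2)).sum := by
  have hR : Multiset.map (R.toList.get) Finset.univ.val = R := by
    rw [Fin.univ_val_map, List.ofFn_get, Multiset.coe_toList]
  have hpow : ∀ j : ℕ, (R.map (· ^ j)).sum = ∑ i : Fin R.toList.length, R.toList.get i ^ j := by
    intro j
    rw [Finset.sum_eq_multiset_sum]
    congr 1
    conv_lhs => rw [← hR]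
    rw [Multiset.map_map]
    rfl
  have h := congrArg (MvPolynomial.aeval (R.toList.get))
    (MvPolynomial.mul_esymm_eq_sum (Fin R.toList.length) ℂ k)
  simp only [map_mul, map_pow, map_sum, map_natCast, map_neg, map_one,
    MvPolynomial.aeval_esymm_eq_multiset_esymm, MvPolynomial.psum, MvPolynomial.aeval_X] at h
  rw [hR] at h
  simp only [hpow]
  exact h

lemma multiset_esymm_zero (R : Multiset ℂ) : R.esymm 0 = 1 := by
  simp [Multiset.esymm]

theorem stmt_15 (n : ℕ) (hn : 1 ≤ n) (θ : ℝ) (P : Polynomial ℂ)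
    (hmonic : P.Monic) (hdeg : P.natDegree = n) :
    (∀ k : ℕ, 1 ≤ k → k ≤ n → (P.roots.map (· ^ k)).sum = (θ : ℂ)) ↔
      P = ∑ i ∈ Finset.range (n + 1),
        C ((((-1 : ℝ) ^ i * gchoose θ i : ℝ) : ℂ)) * X ^ (n - i) := by
  classical
  have hsplits : P.Splits := IsAlgClosed.splits P
  have hcard : Multiset.card P.roots = n := by
    rw [← hdeg]; exact Polynomial.splits_iff_card_roots.mp hsplits
  have hcard' : Multiset.card P.roots = P.natDegree := hcard.trans hdeg.symm
  have hPrepr : P = ∑ j ∈ Finset.range (n + 1),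
      (-1) ^ j * (C (P.roots.esymm j) * X ^ (n - j)) := by
    conv_lhs => rw [← Polynomial.C_leadingCoeff_mul_prod_multiset_X_sub_C hcard']
    rw [hmonic.leadingCoeff, map_one, one_mul, Multiset.prod_X_sub_X_eq_sum_esymm, hcard]
  have hPcoeff : ∀ k, k ≤ n → P.coeff (n - k) = (-1) ^ k * P.roots.esymm k := by
    intro k hk
    have h := Polynomial.coeff_eq_esymm_roots_of_card hcard'
      (k := n - k) (by rw [hdeg]; omega)
    rw [hdeg, Nat.sub_sub_self hk, hmonic.leadingCoeff, one_mul] at h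
    exact h
  have hQcoeff : ∀ k, k ≤ n →
      (∑ i ∈ Finset.range (n + 1),
        C ((((-1 : ℝ) ^ i * gchoose θ i : ℝ) : ℂ)) * X ^ (n - i)).coeff (n - k)
      = ((((-1 : ℝ) ^ k * gchoose θ k : ℝ)) : ℂ) := by
    intro k hk
    rw [Polynomial.finset_sum_coeff]
    rw [Finset.sum_eq_single_of_mem k (Finset.mem_range.mpr (by omega))]
    · rw [Polynomial.coeff_C_mul, Polynomial.coeff_X_pow, if_pos rfl, mul_one]
    · intro i hi hik
      rw [Polynomial.coeff_C_mul, Polynomial.coeff_X_pow, if_neg, mul_zero]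
      have := Finset.mem_range.mp hi
      omega
  constructor
  · intro hpow
    have hEk : ∀ k, k ≤ n → P.roots.esymm k = ((gchoose θ k : ℝ) : ℂ) := by
      intro k
      induction k using Nat.strong_induction_on with
      | _ k ih =>
        intro hkn
        rcases Nat.eq_zero_or_pos k with rfl | hk1
        · simp [multiset_esymm_zero, gchoose_zero]
        · have h1 := newton_multiset P.roots k
          have h2 : ∀ a ∈ (Finset.HasAntidiagonal.antidiagonal k).filter (fun a => a.1 < k),
              (-1 : ℂ) ^ a.1 * P.roots.esymm a.1 * (P.roots.map (· ^ a.2)).sum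
                = (-1) ^ a.1 * ((gchoose θ a.1 : ℝ) : ℂ) * (θ : ℂ) := by
            intro a ha
            obtain ⟨hmem, hlt⟩ := Finset.mem_filter.mp ha
            have hsum := Finset.HasAntidiagonal.mem_antidiagonal.mp hmem
            rw [ih a.1 hlt (by omega), hpow a.2 (by omega) (by omega)]
          rw [Finset.sum_congr rfl h2] at h1
          have h3 := key_complex θ k hk1
          have hknz : (k : ℂ) ≠ 0 := Nat.cast_ne_zero.mpr (by omega)
          exact mul_left_cancel₀ hknz (h1.trans h3.symm)
    rw [hPrepr]
    refine Finset.sum_congr rfl fun j hj => ?_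
    rw [hEk j (by have := Finset.mem_range.mp hj; omega)]
    have hc : ((((-1 : ℝ) ^ j * gchoose θ j : ℝ)) : ℂ)
        = (-1) ^ j * ((gchoose θ j : ℝ) : ℂ) := by push_cast; ring
    rw [hc, map_mul, map_pow, map_neg, map_one]
    ring
  · intro hQ
    have hEk : ∀ k, k ≤ n → P.roots.esymm k = ((gchoose θ k : ℝ) : ℂ) := by
      intro k hk
      have h1 := hPcoeff k hk
      have h2 := hQcoeff k hk
      rw [← hQ] at h2
      rw [h1] at h2
      have : ((((-1 : ℝ) ^ k * gchoose θ k : ℝ)) : ℂ)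
          = (-1) ^ k * ((gchoose θ k : ℝ) : ℂ) := by push_cast; ring
      rw [this] at h2
      exact mul_left_cancel₀ (pow_ne_zero _ (neg_ne_zero.mpr one_ne_zero)) h2
    intro k
    induction k using Nat.strong_induction_on with
    | _ k ih =>
      intro hk1 hkn
      have h1 := newton_multiset P.roots k
      have h3 := key_complex θ k hk1
      rw [hEk k hkn] at h1
      have h4 := mul_left_cancel₀ (pow_ne_zero (k + 1) (neg_ne_zero.mpr (one_ne_zero (α := ℂ))))
        (h1.symm.trans h3)
      have hmem : ((0 : ℕ), k) ∈ (Finset.HasAntidiagonal.antidiagonal k).filter (fun a => a.1 < k) := by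
        simp only [Finset.mem_filter, Finset.HasAntidiagonal.mem_antidiagonal]
        omega
      rw [← Finset.add_sum_erase _ _ hmem, ← Finset.add_sum_erase _ _ hmem] at h4
      have h5 : ∑ a ∈ ((Finset.HasAntidiagonal.antidiagonal k).filter (fun a => a.1 < k)).erase (0, k),
          (-1 : ℂ) ^ a.1 * P.roots.esymm a.1 * (P.roots.map (· ^ a.2)).sum
          = ∑ a ∈ ((Finset.HasAntidiagonal.antidiagonal k).filter (fun a => a.1 < k)).erase (0, k),
          (-1) ^ a.1 * ((gchoose θ a.1 : ℝ) : ℂ) * (θ : ℂ) := by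
        refine Finset.sum_congr rfl fun a ha => ?_
        obtain ⟨hne, hf⟩ := Finset.mem_erase.mp ha
        obtain ⟨hmem', hlt⟩ := Finset.mem_filter.mp hf
        have hsum := Finset.HasAntidiagonal.mem_antidiagonal.mp hmem'
        have ha1 : 1 ≤ a.1 := by
          rcases Nat.eq_zero_or_pos a.1 with h0 | h
          · exact absurd (Prod.ext h0 (by omega)) hne
          · exact h
        rw [hEk a.1 (by omega), ih a.2 (by omega) (by omega) (by omega)]
      rw [h5] at h4
      have h6 := add_right_cancel h4
      simpa [multiset_esymm_zero, gchoose_zero] using h6
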